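/- Let ρ, σ be density matrices on a 2^n-dimensional Hilbert space with d = ‖ρ − σ‖₁ ≤ 1/e. Then |S(ρ) − S(σ)| ≤ d·n − d·log₂ d, where S is the von Neumann entropy in bits. -/

import Mathlib

open scoped ComplexOrder
open Matrix

/-- The trace norm `‖A‖₁ = Tr √(AᴴA)` of a complex matrix. -/
noncomputable def traceNorm {n : Type*} [Fintype n] [DecidableEq n] (A : Matrix n n ℂ) : ℝ :=
  (((Matrix.posSemidef_conjTranspose_mul_self A).1.eigenvectorUnitary.1 *
      Matrix.diagonal (((↑) : ℝ → ℂ) ∘ (√·) ∘ (Matrix.posSemidef_conjTranspose_mul_self A).1.eigenvalues) *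
      (star (Matrix.posSemidef_conjTranspose_mul_self A).1.eigenvectorUnitary : Matrix n n ℂ)).trace).re

/-- The von Neumann entropy (in bits) of a Hermitian matrix, computed from its
eigenvalues: `S(ρ) = -∑ λᵢ log₂ λᵢ`. -/
noncomputable def vonNeumannEntropy {n : Type*} [Fintype n] [DecidableEq n]
    {ρ : Matrix n n ℂ} (h : ρ.IsHermitian) : ℝ :=
  -∑ i, h.eigenvalues i * Real.logb 2 (h.eigenvalues i)

variable {N : ℕ} {A B : Matrix (Fin N) (Fin N) ℂ}

namespace Fannes

noncomputable def evec (hA : A.IsHermitian) (j : Fin N) : Fin N → ℂ := ⇑(hA.eigenvectorBasis j)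

/-- the linear functional `x ↦ ⟪v, x⟫` as dot product -/
noncomputable def dotL (v : Fin N → ℂ) : (Fin N → ℂ) →ₗ[ℂ] ℂ where
  toFun x := star v ⬝ᵥ x
  map_add' x y := dotProduct_add _ _ _
  map_smul' c x := by simp [dotProduct_smul]

noncomputable def coord (hA : A.IsHermitian) (x : Fin N → ℂ) (i : Fin N) : ℂ :=
  star (evec hA i) ⬝ᵥ x

lemma star_evec_dot (hA : A.IsHermitian) (i j : Fin N) :
    star (evec hA i) ⬝ᵥ evec hA j = if i = j then 1 else 0 := by
  have h := hA.eigenvectorBasis.orthonormal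
  rw [orthonormal_iff_ite] at h
  have := h i j
  rwa [EuclideanSpace.inner_eq_star_dotProduct, dotProduct_comm] at this

lemma evec_li (hA : A.IsHermitian) : LinearIndependent ℂ (evec hA) := by
  rw [Fintype.linearIndependent_iff]
  intro g hg i
  have := congrArg (dotL (evec hA i)) hg
  simp only [map_sum, _root_.map_smul, map_zero] at this
  simpa [dotL, star_evec_dot, smul_eq_mul] using this

lemma coord_eq_zero_of_mem_span (hA : A.IsHermitian) {T : Set (Fin N)} {x : Fin N → ℂ}
    (hx : x ∈ Submodule.span ℂ (evec hA '' T)) {i : Fin N} (hi : i ∉ T) :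
    coord hA x i = 0 := by
  have hker : Submodule.span ℂ (evec hA '' T) ≤ LinearMap.ker (dotL (evec hA i)) := by
    rw [Submodule.span_le]
    rintro _ ⟨j, hj, rfl⟩
    simp only [SetLike.mem_coe, LinearMap.mem_ker, dotL, LinearMap.coe_mk, AddHom.coe_mk]
    rw [star_evec_dot]
    simp only [ite_eq_right_iff]
    intro h; exact absurd (h ▸ hj) hi
  have := hker hx
  rwa [LinearMap.mem_ker] at this

lemma finrank_span_evec (hA : A.IsHermitian) (s : Finset (Fin N)) :
    Module.finrank ℂ (Submodule.span ℂ (evec hA '' ↑s)) = s.card := by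
  have hli : LinearIndependent ℂ (fun j : ↥s => evec hA j) :=
    (evec_li hA).comp _ Subtype.val_injective
  have : evec hA '' ↑s = Set.range (fun j : ↥s => evec hA j) := by
    ext v
    simp [Set.mem_image, Set.mem_range]
  rw [this, finrank_span_eq_card hli, Fintype.card_coe]


lemma coord_eq (hA : A.IsHermitian) (x : Fin N → ℂ) :
    coord hA x = (star (hA.eigenvectorUnitary : Matrix (Fin N) (Fin N) ℂ)) *ᵥ x := by
  funext i
  simp only [coord, evec, mulVec, dotProduct, Pi.star_apply, Matrix.star_apply,
    Matrix.IsHermitian.eigenvectorUnitary_apply]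

lemma rayleigh_eq (hA : A.IsHermitian) (x : Fin N → ℂ) :
    star x ⬝ᵥ (A *ᵥ x) = ∑ i, (hA.eigenvalues i : ℂ) * ((starRingEnd ℂ) (coord hA x i) * coord hA x i) := by
  set U : Matrix (Fin N) (Fin N) ℂ := (hA.eigenvectorUnitary : Matrix (Fin N) (Fin N) ℂ) with hU
  have hster : star x ᵥ* U = star (coord hA x) := by
    rw [coord_eq, star_mulVec, star_eq_conjTranspose, conjTranspose_conjTranspose]
  conv_lhs => rw [hA.spectral_theorem, Unitary.conjStarAlgAut_apply]
  rw [← mulVec_mulVec, ← mulVec_mulVec, dotProduct_mulVec, hster, ← coord_eq]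
  simp only [mulVec_diagonal, dotProduct, Pi.star_apply, Function.comp_apply]
  exact Finset.sum_congr rfl fun i _ => by simp only [RCLike.star_def]; rw [mul_left_comm]; norm_cast

lemma normsq_eq (hA : A.IsHermitian) (x : Fin N → ℂ) :
    star x ⬝ᵥ x = ∑ i, (starRingEnd ℂ) (coord hA x i) * coord hA x i := by
  set U : Matrix (Fin N) (Fin N) ℂ := (hA.eigenvectorUnitary : Matrix (Fin N) (Fin N) ℂ) with hU
  have hster : star x ᵥ* U = star (coord hA x) := by
    rw [coord_eq, star_mulVec, star_eq_conjTranspose, conjTranspose_conjTranspose]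
  have : star (coord hA x) ⬝ᵥ coord hA x = star x ⬝ᵥ x := by
    have h1 : U * star U = 1 := mem_unitaryGroup_iff.mp hA.eigenvectorUnitary.2
    rw [coord_eq, star_mulVec, ← star_eq_conjTranspose, star_star, ← dotProduct_mulVec,
      mulVec_mulVec, h1, one_mulVec]
  rw [← this]
  simp [dotProduct]


lemma rayleigh_re (hA : A.IsHermitian) (x : Fin N → ℂ) :
    (star x ⬝ᵥ (A *ᵥ x)).re = ∑ i, hA.eigenvalues i * Complex.normSq (coord hA x i) := by
  rw [rayleigh_eq, Complex.re_sum]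
  refine Finset.sum_congr rfl fun i _ => ?_
  rw [mul_comm ((starRingEnd ℂ) (coord hA x i)), Complex.mul_conj, ← Complex.ofReal_mul,
    Complex.ofReal_re]

lemma normsq_re (hA : A.IsHermitian) (x : Fin N → ℂ) :
    (star x ⬝ᵥ x).re = ∑ i, Complex.normSq (coord hA x i) := by
  rw [normsq_eq hA, Complex.re_sum]
  refine Finset.sum_congr rfl fun i _ => ?_
  rw [mul_comm ((starRingEnd ℂ) (coord hA x i)), Complex.mul_conj, Complex.ofReal_re]

lemma normsq_pos {x : Fin N → ℂ} (hx : x ≠ 0) : 0 < (star x ⬝ᵥ x).re := by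
  have h : (star x ⬝ᵥ x).re = ∑ i, Complex.normSq (x i) := by
    simp [dotProduct, Complex.re_sum, mul_comm, Complex.mul_conj]
  rw [h]
  obtain ⟨i, hi⟩ : ∃ i, x i ≠ 0 := Function.ne_iff.mp hx
  exact Finset.sum_pos' (fun j _ => Complex.normSq_nonneg _)
    ⟨i, Finset.mem_univ i, Complex.normSq_pos.mpr hi⟩

lemma rayleigh_ge (hA : A.IsHermitian) {T : Set (Fin N)} {c : ℝ}
    (hc : ∀ i ∈ T, c ≤ hA.eigenvalues i) {x : Fin N → ℂ}
    (hx : x ∈ Submodule.span ℂ (evec hA '' T)) :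
    c * (star x ⬝ᵥ x).re ≤ (star x ⬝ᵥ (A *ᵥ x)).re := by
  rw [rayleigh_re, normsq_re hA, Finset.mul_sum]
  refine Finset.sum_le_sum fun i _ => ?_
  by_cases hi : i ∈ T
  · exact mul_le_mul_of_nonneg_right (hc i hi) (Complex.normSq_nonneg _)
  · rw [coord_eq_zero_of_mem_span hA hx hi]
    simp

lemma rayleigh_le (hA : A.IsHermitian) {T : Set (Fin N)} {c : ℝ}
    (hc : ∀ i ∈ T, hA.eigenvalues i ≤ c) {x : Fin N → ℂ}
    (hx : x ∈ Submodule.span ℂ (evec hA '' T)) :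
    (star x ⬝ᵥ (A *ᵥ x)).re ≤ c * (star x ⬝ᵥ x).re := by
  rw [rayleigh_re, normsq_re hA, Finset.mul_sum]
  refine Finset.sum_le_sum fun i _ => ?_
  by_cases hi : i ∈ T
  · exact mul_le_mul_of_nonneg_right (hc i hi) (Complex.normSq_nonneg _)
  · rw [coord_eq_zero_of_mem_span hA hx hi]
    simp

/-- sorted (increasing) eigenvalues -/
noncomputable def sortEig (hA : A.IsHermitian) : Fin N → ℝ :=
  hA.eigenvalues ∘ Tuple.sort hA.eigenvalues

lemma monotone_sortEig (hA : A.IsHermitian) : Monotone (sortEig hA) :=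
  Tuple.monotone_sort hA.eigenvalues

/-- Weyl monotonicity: if `B - A` is PSD then sorted eigenvalues dominate. -/
theorem sortEig_mono (hA : A.IsHermitian) (hB : B.IsHermitian)
    (hAB : (B - A).PosSemidef) (k : Fin N) : sortEig hA k ≤ sortEig hB k := by
  classical
  set p := Tuple.sort hA.eigenvalues
  set q := Tuple.sort hB.eigenvalues
  set V := Submodule.span ℂ (evec hA '' ↑((Finset.Ici k).image p))
  set W := Submodule.span ℂ (evec hB '' ↑((Finset.Iic k).image q))
  have hV : Module.finrank ℂ V = N - k.val := by
    rw [finrank_span_evec, Finset.card_image_of_injective _ p.injective, Fin.card_Ici]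
  have hW : Module.finrank ℂ W = k.val + 1 := by
    rw [finrank_span_evec, Finset.card_image_of_injective _ q.injective, Fin.card_Iic]
  have hinf : V ⊓ W ≠ ⊥ := by
    intro h
    have h1 := Submodule.finrank_sup_add_finrank_inf_eq V W
    rw [h, finrank_bot, add_zero, hV, hW] at h1
    have h2 : Module.finrank ℂ ↥(V ⊔ W) ≤ N := by
      simpa using Submodule.finrank_le (V ⊔ W)
    omega
  obtain ⟨x, hxVW, hx0⟩ := Submodule.exists_mem_ne_zero_of_ne_bot hinf
  have hxV : x ∈ V := hxVW.1
  have hxW : x ∈ W := hxVW.2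
  have hge : sortEig hA k * (star x ⬝ᵥ x).re ≤ (star x ⬝ᵥ (A *ᵥ x)).re := by
    refine rayleigh_ge hA (fun i hi => ?_) hxV
    simp only [Finset.coe_image, Set.mem_image, Finset.mem_coe, Finset.mem_Ici] at hi
    obtain ⟨j, hj, rfl⟩ := hi
    exact monotone_sortEig hA hj
  have hle : (star x ⬝ᵥ (B *ᵥ x)).re ≤ sortEig hB k * (star x ⬝ᵥ x).re := by
    refine rayleigh_le hB (fun i hi => ?_) hxW
    simp only [Finset.coe_image, Set.mem_image, Finset.mem_coe, Finset.mem_Iic] at hi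
    obtain ⟨j, hj, rfl⟩ := hi
    exact monotone_sortEig hB hj
  have hmid : (star x ⬝ᵥ (A *ᵥ x)).re ≤ (star x ⬝ᵥ (B *ᵥ x)).re := by
    have h0 := hAB.dotProduct_mulVec_nonneg x
    have : (star x ⬝ᵥ ((B - A) *ᵥ x)) = star x ⬝ᵥ (B *ᵥ x) - star x ⬝ᵥ (A *ᵥ x) := by
      rw [sub_mulVec, dotProduct_sub]
    rw [this] at h0
    have := Complex.le_def.mp h0
    simp only [Complex.zero_re, Complex.sub_re] at this
    linarith [this.1]
  have hpos := normsq_pos hx0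
  have := le_trans hge (le_trans hmid hle)
  exact le_of_mul_le_mul_right (by linarith) hpos

/-- conjugate a real diagonal by the eigenvector unitary of `A` -/
noncomputable def cdiag (hA : A.IsHermitian) (f : Fin N → ℝ) : Matrix (Fin N) (Fin N) ℂ :=
  (hA.eigenvectorUnitary : Matrix (Fin N) (Fin N) ℂ) * diagonal (Complex.ofReal ∘ f) *
    star (hA.eigenvectorUnitary : Matrix (Fin N) (Fin N) ℂ)

lemma cdiag_eigenvalues (hA : A.IsHermitian) : cdiag hA hA.eigenvalues = A :=
  (hA.spectral_theorem).symm

lemma cdiag_posSemidef (hA : A.IsHermitian) {f : Fin N → ℝ} (hf : ∀ i, 0 ≤ f i) :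
    (cdiag hA f).PosSemidef := by
  rw [cdiag, star_eq_conjTranspose]
  refine Matrix.PosSemidef.mul_mul_conjTranspose_same ?_ _
  refine posSemidef_diagonal_iff.mpr fun i => ?_
  exact Complex.zero_le_real.mpr (hf i)

lemma cdiag_sub (hA : A.IsHermitian) (f g : Fin N → ℝ) :
    cdiag hA f - cdiag hA g = cdiag hA (f - g) := by
  have hc : (fun i => (Complex.ofReal ∘ f) i - (Complex.ofReal ∘ g) i)
      = Complex.ofReal ∘ (f - g) := by funext i; simp
  simp only [cdiag, ← sub_mul, ← mul_sub, diagonal_sub, hc]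

lemma cdiag_trace (hA : A.IsHermitian) (f : Fin N → ℝ) :
    (cdiag hA f).trace = ∑ i, (f i : ℂ) := by
  rw [cdiag, trace_mul_cycle]
  have h1 : star (hA.eigenvectorUnitary : Matrix (Fin N) (Fin N) ℂ) *
      (hA.eigenvectorUnitary : Matrix (Fin N) (Fin N) ℂ) = 1 :=
    mem_unitaryGroup_iff'.mp hA.eigenvectorUnitary.2
  rw [h1, one_mul, trace_diagonal]
  rfl

lemma cdiag_mul (hA : A.IsHermitian) (f g : Fin N → ℝ) :
    cdiag hA f * cdiag hA g = cdiag hA (f * g) := by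
  have h1 : star (hA.eigenvectorUnitary : Matrix (Fin N) (Fin N) ℂ) *
      (hA.eigenvectorUnitary : Matrix (Fin N) (Fin N) ℂ) = 1 :=
    mem_unitaryGroup_iff'.mp hA.eigenvectorUnitary.2
  have h1' : ∀ X : Matrix (Fin N) (Fin N) ℂ,
      star (hA.eigenvectorUnitary : Matrix (Fin N) (Fin N) ℂ) *
      ((hA.eigenvectorUnitary : Matrix (Fin N) (Fin N) ℂ) * X) = X := fun X => by
    rw [← mul_assoc, h1, one_mul]
  have hc : (fun i => (Complex.ofReal ∘ f) i * (Complex.ofReal ∘ g) i)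
      = Complex.ofReal ∘ (f * g) := by funext i; simp
  simp only [cdiag, mul_assoc]
  rw [h1', ← mul_assoc (diagonal (Complex.ofReal ∘ f)), diagonal_mul_diagonal, hc]

open scoped MatrixOrder in
lemma traceNorm_hermitian (hA : A.IsHermitian) :
    traceNorm A = ∑ i, |hA.eigenvalues i| := by
  have hB : (cdiag hA (fun i => |hA.eigenvalues i|)).PosSemidef :=
    cdiag_posSemidef hA fun i => abs_nonneg _
  have h2 := cdiag_mul hA hA.eigenvalues hA.eigenvalues
  rw [cdiag_eigenvalues] at h2
  have hsq : (cdiag hA (fun i => |hA.eigenvalues i|)) ^ 2 = Aᴴ * A := by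
    rw [sq, cdiag_mul]
    have habs : ((fun i => |hA.eigenvalues i|) * fun i => |hA.eigenvalues i|)
        = hA.eigenvalues * hA.eigenvalues := by
      funext i; simp [Pi.mul_apply, ← sq, sq_abs]
    rw [habs, hA.eq]
    exact h2.symm
  have h3 : cdiag hA (fun i => |hA.eigenvalues i|) =
      (Matrix.posSemidef_conjTranspose_mul_self A).1.eigenvectorUnitary.1 *
      Matrix.diagonal (((↑) : ℝ → ℂ) ∘ (√·) ∘ (Matrix.posSemidef_conjTranspose_mul_self A).1.eigenvalues) *
      (star (Matrix.posSemidef_conjTranspose_mul_self A).1.eigenvectorUnitary : Matrix (Fin N) (Fin N) ℂ) := by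
    have hP := posSemidef_conjTranspose_mul_self A
    have hM : (cdiag hP.1 ((√·) ∘ hP.1.eigenvalues)).PosSemidef :=
      cdiag_posSemidef hP.1 fun i => Real.sqrt_nonneg _
    have hMM : cdiag hP.1 ((√·) ∘ hP.1.eigenvalues) * cdiag hP.1 ((√·) ∘ hP.1.eigenvalues)
        = Aᴴ * A := by
      rw [cdiag_mul]
      conv_rhs => rw [← cdiag_eigenvalues hP.1]
      congr 1
      funext i
      simp only [Pi.mul_apply, Function.comp_apply]
      exact Real.mul_self_sqrt (hP.eigenvalues_nonneg i)
    have e1 : CFC.sqrt (Aᴴ * A) = cdiag hA (fun i => |hA.eigenvalues i|) :=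
      CFC.sqrt_unique (by rw [← sq]; exact hsq) hB.nonneg
    have e2 : CFC.sqrt (Aᴴ * A) = cdiag hP.1 ((√·) ∘ hP.1.eigenvalues) :=
      CFC.sqrt_unique hMM hM.nonneg
    exact e1.symm.trans e2
  rw [traceNorm, ← h3, cdiag_trace, Complex.re_sum]
  exact Finset.sum_congr rfl fun i _ => Complex.ofReal_re _

lemma re_trace_eq_sum_eigenvalues (hA : A.IsHermitian) :
    A.trace.re = ∑ i, hA.eigenvalues i := by
  have h := cdiag_trace hA hA.eigenvalues
  rw [cdiag_eigenvalues] at h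
  rw [h, Complex.re_sum]
  exact Finset.sum_congr rfl fun i _ => Complex.ofReal_re _

lemma sum_sortEig (hA : A.IsHermitian) : ∑ k, sortEig hA k = ∑ i, hA.eigenvalues i :=
  Equiv.sum_comp (Tuple.sort hA.eigenvalues) hA.eigenvalues

/-- Mirsky-type inequality -/
theorem sum_abs_sortEig_sub_le (hA : A.IsHermitian) (hB : B.IsHermitian) :
    ∑ k, |sortEig hA k - sortEig hB k| ≤ traceNorm (A - B) := by
  have hD : (A - B).IsHermitian := hA.sub hB
  set P := cdiag hD (fun i => max (hD.eigenvalues i) 0) with hPdef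
  set Q := cdiag hD (fun i => max (-hD.eigenvalues i) 0) with hQdef
  have hPpsd : P.PosSemidef := cdiag_posSemidef hD fun i => le_max_right _ _
  have hQpsd : Q.PosSemidef := cdiag_posSemidef hD fun i => le_max_right _ _
  have hPQ : P - Q = A - B := by
    rw [hPdef, hQdef, cdiag_sub]
    have : ((fun i => max (hD.eigenvalues i) 0) - fun i => max (-hD.eigenvalues i) 0)
        = hD.eigenvalues := by
      funext i
      simp [max_zero_sub_max_neg_zero_eq_self]
    rw [this, cdiag_eigenvalues]
  set C := B + P with hCdef
  have hC : C.IsHermitian := hB.add hPpsd.1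
  have hCA : (C - A).PosSemidef := by
    have h : C - A = Q := by
      have hP' : P = A - B + Q := sub_eq_iff_eq_add.mp hPQ
      rw [hCdef, hP']; abel
    rwa [h]
  have hCB : (C - B).PosSemidef := by
    have h : C - B = P := by rw [hCdef]; abel
    rwa [h]
  have h1 : ∀ k, sortEig hA k ≤ sortEig hC k := sortEig_mono hA hC hCA
  have h2 : ∀ k, sortEig hB k ≤ sortEig hC k := sortEig_mono hB hC hCB
  have hterm : ∀ k, |sortEig hA k - sortEig hB k|
      ≤ (sortEig hC k - sortEig hA k) + (sortEig hC k - sortEig hB k) := by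
    intro k
    rw [abs_sub_le_iff]
    constructor <;> [linarith [h1 k, h2 k]; linarith [h1 k, h2 k]]
  calc ∑ k, |sortEig hA k - sortEig hB k|
      ≤ ∑ k, ((sortEig hC k - sortEig hA k) + (sortEig hC k - sortEig hB k)) :=
        Finset.sum_le_sum fun k _ => hterm k
    _ = 2 * (∑ k, sortEig hC k) - (∑ k, sortEig hA k) - (∑ k, sortEig hB k) := by
        rw [Finset.sum_add_distrib, Finset.sum_sub_distrib, Finset.sum_sub_distrib]; ring
    _ = 2 * C.trace.re - A.trace.re - B.trace.re := by
        rw [sum_sortEig, sum_sortEig, sum_sortEig, re_trace_eq_sum_eigenvalues hA,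
          re_trace_eq_sum_eigenvalues hB, re_trace_eq_sum_eigenvalues hC]
    _ = P.trace.re + Q.trace.re := by
        have htr : C.trace = B.trace + P.trace := by rw [hCdef, trace_add]
        have htr2 : P.trace - Q.trace = A.trace - B.trace := by
          rw [← trace_sub, hPQ, trace_sub]
        have h3 := congrArg Complex.re htr
        have h4 := congrArg Complex.re htr2
        simp only [Complex.add_re, Complex.sub_re] at h3 h4
        linarith
    _ = traceNorm (A - B) := by
        rw [traceNorm_hermitian hD, hPdef, hQdef, cdiag_trace, cdiag_trace]
        rw [Complex.re_sum, Complex.re_sum, ← Finset.sum_add_distrib]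
        refine (Finset.sum_congr rfl fun i _ => ?_).symm
        simp only [Complex.ofReal_re]
        exact (max_zero_add_max_neg_zero_eq_abs_self _).symm

/-! ### The function `η t = -t log t` -/

noncomputable def eta (t : ℝ) : ℝ := -(t * Real.log t)

lemma eta_zero : eta 0 = 0 := by simp [eta]

lemma eta_nonneg {t : ℝ} (h0 : 0 ≤ t) (h1 : t ≤ 1) : 0 ≤ eta t := by
  rw [eta, neg_nonneg]
  rcases eq_or_lt_of_le h0 with h | h
  · simp [← h]
  · exact mul_nonpos_of_nonneg_of_nonpos h0 (Real.log_nonpos h0 h1)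

lemma eta_le_add (x t : ℝ) (hx : 0 ≤ x) (ht : 0 < t) :
    eta (x + t) ≤ eta x + eta t := by
  simp only [eta]
  have h1 : x * Real.log x ≤ x * Real.log (x + t) := by
    rcases eq_or_lt_of_le hx with h | h
    · simp [← h]
    · exact mul_le_mul_of_nonneg_left (Real.log_le_log h (by linarith)) hx
  have h2 : t * Real.log t ≤ t * Real.log (x + t) := by
    exact mul_le_mul_of_nonneg_left (Real.log_le_log ht (by linarith)) ht.le
  have : (x + t) * Real.log (x + t) = x * Real.log (x + t) + t * Real.log (x + t) := by ring
  nlinarith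

lemma eta_sub_le (x t : ℝ) (hx : 0 ≤ x) (ht : 0 < t) (hxt : x + t ≤ 1)
    (hte : t ≤ Real.exp (-1)) : eta x - eta (x + t) ≤ eta t := by
  rcases eq_or_lt_of_le hx with h | hxpos
  · -- x = 0
    rw [← h, eta_zero, zero_add, zero_sub]
    have het : 0 ≤ eta t := eta_nonneg ht.le (by linarith)
    linarith
  · -- x > 0
    have hxt0 : 0 < x + t := by linarith
    -- x * log ((x+t)/x) ≤ t
    have key1 : x * (Real.log (x + t) - Real.log x) ≤ t := by
      have hq : 0 < (x + t) / x := div_pos hxt0 hxpos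
      have := Real.log_le_sub_one_of_pos hq
      rw [Real.log_div hxt0.ne' hxpos.ne'] at this
      have h2 : (x + t) / x - 1 = t / x := by field_simp; ring
      rw [h2] at this
      calc x * (Real.log (x + t) - Real.log x) ≤ x * (t / x) :=
            mul_le_mul_of_nonneg_left this hxpos.le
        _ = t := by field_simp
    -- log (t * (x+t)) ≤ -1
    have key2 : Real.log (x + t) + Real.log t ≤ -1 := by
      have hprod : t * (x + t) ≤ Real.exp (-1) := by nlinarith [Real.exp_pos (-1)]
      have := Real.log_le_log (by positivity : (0:ℝ) < t * (x + t)) hprod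
      rw [Real.log_mul ht.ne' hxt0.ne', Real.log_exp] at this
      linarith
    simp only [eta]
    nlinarith [mul_le_mul_of_nonneg_left key2 ht.le]

lemma abs_eta_sub_eta_le {x y : ℝ} (hx0 : 0 ≤ x) (hx1 : x ≤ 1) (hy0 : 0 ≤ y) (hy1 : y ≤ 1)
    (hxy : |x - y| ≤ Real.exp (-1)) : |eta x - eta y| ≤ eta |x - y| := by
  wlog hle : x ≤ y generalizing x y
  · rw [abs_sub_comm, abs_sub_comm x y]
    exact this hy0 hy1 hx0 hx1 (by rwa [abs_sub_comm]) (by linarith)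
  set t := y - x with htdef
  have ht0 : 0 ≤ t := by linarith
  have habs : |x - y| = t := by rw [abs_sub_comm, abs_of_nonneg ht0]
  rw [habs] at hxy ⊢
  rcases eq_or_lt_of_le ht0 with h | htpos
  · have hxy' : y = x := by rw [htdef] at h; linarith
    rw [hxy', ← h]
    simp [eta_zero]
  · have hy : y = x + t := by rw [htdef]; ring
    rw [abs_le]
    constructor
    · have h1 := eta_le_add x t hx0 htpos
      rw [← hy] at h1
      linarith
    · have h1 := eta_sub_le x t hx0 htpos (by rw [← hy]; exact hy1) hxy
      rw [← hy] at h1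
      linarith

lemma eta_mono {a b : ℝ} (ha : 0 ≤ a) (hab : a ≤ b) (hb : b ≤ Real.exp (-1)) :
    eta a ≤ eta b := by
  have hb1 : b ≤ 1 := le_trans hb (by
    have := Real.exp_lt_one_iff.mpr (by norm_num : (-1:ℝ) < 0)
    linarith)
  rcases eq_or_lt_of_le ha with h | hapos
  · rw [← h, eta_zero]; exact eta_nonneg (le_trans ha hab) hb1
  · rcases eq_or_lt_of_le hab with h | hab'
    · rw [h]
    · have hbpos : 0 < b := lt_trans hapos hab'
      have key : a * (Real.log a - Real.log b) ≥ a - b := by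
        have hq : 0 < b / a := div_pos hbpos hapos
        have := Real.log_le_sub_one_of_pos hq
        rw [Real.log_div hbpos.ne' hapos.ne'] at this
        have h2 : a * (Real.log b - Real.log a) ≤ a * (b / a - 1) :=
          mul_le_mul_of_nonneg_left this hapos.le
        have h3 : a * (b / a - 1) = b - a := by field_simp
        nlinarith
      have hlogb : Real.log b ≤ -1 := by
        have := Real.log_le_log hbpos hb
        rwa [Real.log_exp] at this
      simp only [eta]
      nlinarith [mul_le_mul_of_nonneg_left hlogb (sub_nonneg.mpr hab)]

lemma sum_eta_le {M : ℕ} (hM : 0 < M) (ε : Fin M → ℝ) (hε : ∀ i, 0 ≤ ε i) :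
    ∑ i, eta (ε i) ≤ eta (∑ i, ε i) + (∑ i, ε i) * Real.log M := by
  set s := ∑ i, ε i with hsdef
  have hs0 : 0 ≤ s := Finset.sum_nonneg fun i _ => hε i
  rcases eq_or_lt_of_le hs0 with h | hs
  · have hall : ∀ i ∈ Finset.univ, ε i = 0 :=
      (Finset.sum_eq_zero_iff_of_nonneg fun i _ => hε i).mp h.symm
    have : ∑ i, eta (ε i) = 0 := Finset.sum_eq_zero fun i hi => by rw [hall i hi, eta_zero]
    rw [this, ← h, eta_zero]
    simp
  · have hMpos : (0:ℝ) < M := Nat.cast_pos.mpr hM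
    have hq : 0 < s / M := div_pos hs hMpos
    have hterm : ∀ i, eta (ε i) ≤ -(ε i * Real.log (s / M)) + (s / M - ε i) := by
      intro i
      rcases eq_or_lt_of_le (hε i) with h | hpos
      · rw [← h, eta_zero]
        simp only [zero_mul, neg_zero, zero_add, sub_zero]
        positivity
      · have hr : 0 < (s / M) / ε i := div_pos hq hpos
        have hl := Real.log_le_sub_one_of_pos hr
        rw [Real.log_div hq.ne' hpos.ne'] at hl
        have h2 : ε i * (Real.log (s / M) - Real.log (ε i)) ≤ ε i * ((s / M) / ε i - 1) :=
          mul_le_mul_of_nonneg_left hl hpos.le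
        have h3 : ε i * ((s / M) / ε i - 1) = s / M - ε i := by field_simp
        rw [h3] at h2
        simp only [eta]
        nlinarith
    calc ∑ i, eta (ε i) ≤ ∑ i, (-(ε i * Real.log (s / M)) + (s / M - ε i)) :=
          Finset.sum_le_sum fun i _ => hterm i
      _ = -(s * Real.log (s / M)) + (M * (s / M) - s) := by
          have e1 : ∑ x : Fin M, -(ε x * Real.log (s / ↑M)) = -(s * Real.log (s / ↑M)) := by
            rw [Finset.sum_neg_distrib, ← Finset.sum_mul, ← hsdef]
          have e2 : (∑ _x : Fin M, s / (M:ℝ)) = ↑M * (s / ↑M) := by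
            rw [Finset.sum_const, Finset.card_univ, Fintype.card_fin, nsmul_eq_mul]
          rw [Finset.sum_add_distrib, Finset.sum_sub_distrib, e1, e2, ← hsdef]
      _ = -(s * Real.log (s / M)) := by field_simp; ring
      _ = eta s + s * Real.log M := by
          rw [Real.log_div hs.ne' hMpos.ne', eta]
          ring

lemma vonNeumannEntropy_eq_sum_eta {M : ℕ} {ρ : Matrix (Fin M) (Fin M) ℂ}
    (h : ρ.IsHermitian) :
    vonNeumannEntropy h = (∑ i, eta (h.eigenvalues i)) / Real.log 2 := by
  rw [vonNeumannEntropy, Finset.sum_div, ← Finset.sum_neg_distrib]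
  refine Finset.sum_congr rfl fun i _ => ?_
  rw [Real.logb, eta]
  field_simp

lemma eigenvalues_bounds {M : ℕ} {ρ : Matrix (Fin M) (Fin M) ℂ} (hρ : ρ.PosSemidef)
    (htr : ρ.trace = 1) : ∀ i, 0 ≤ hρ.1.eigenvalues i ∧ hρ.1.eigenvalues i ≤ 1 := by
  intro i
  have hnn : ∀ j, 0 ≤ hρ.1.eigenvalues j := fun j => hρ.eigenvalues_nonneg j
  have hsum : ∑ j, hρ.1.eigenvalues j = 1 := by
    rw [← re_trace_eq_sum_eigenvalues hρ.1, htr, Complex.one_re]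
  refine ⟨hnn i, ?_⟩
  calc hρ.1.eigenvalues i ≤ ∑ j, hρ.1.eigenvalues j :=
        Finset.single_le_sum (fun j _ => hnn j) (Finset.mem_univ i)
    _ = 1 := hsum

end Fannes

namespace Fannes

lemma key {M : ℕ} (hM : 0 < M) (lam mu : Fin M → ℝ) (d : ℝ)
    (hl : ∀ k, 0 ≤ lam k ∧ lam k ≤ 1) (hm : ∀ k, 0 ≤ mu k ∧ mu k ≤ 1)
    (hsum : ∑ k, |lam k - mu k| ≤ d) (hde : d ≤ Real.exp (-1)) :
    |∑ k, eta (lam k) - ∑ k, eta (mu k)| ≤ eta d + d * Real.log M := by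
  set ε : Fin M → ℝ := fun k => |lam k - mu k| with hεdef
  have hε0 : ∀ k, 0 ≤ ε k := fun k => abs_nonneg _
  set s := ∑ k, ε k with hsdef
  have hs0 : 0 ≤ s := Finset.sum_nonneg fun k _ => hε0 k
  have hεs : ∀ k, ε k ≤ s := fun k =>
    Finset.single_le_sum (fun j _ => hε0 j) (Finset.mem_univ k)
  have hlogM : 0 ≤ Real.log M := Real.log_nonneg (by exact_mod_cast hM)
  have h1 : |∑ k, eta (lam k) - ∑ k, eta (mu k)|
      ≤ ∑ k, |eta (lam k) - eta (mu k)| := by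
    rw [← Finset.sum_sub_distrib]
    exact Finset.abs_sum_le_sum_abs _ _
  have h2 : ∑ k, |eta (lam k) - eta (mu k)| ≤ ∑ k, eta (ε k) := by
    refine Finset.sum_le_sum fun k _ => ?_
    exact abs_eta_sub_eta_le (hl k).1 (hl k).2 (hm k).1 (hm k).2
      (le_trans (hεs k) (le_trans hsum hde))
  have h3 : ∑ k, eta (ε k) ≤ eta s + s * Real.log M := sum_eta_le hM ε hε0
  have h4 : eta s + s * Real.log M ≤ eta d + d * Real.log M := by
    have h5 := eta_mono hs0 (le_trans hsum le_rfl) hde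
    have h6 : s * Real.log M ≤ d * Real.log M :=
      mul_le_mul_of_nonneg_right (le_trans hsum le_rfl) hlogM
    linarith
  linarith

end Fannes

set_option maxHeartbeats 1000000 in
/-- Fannes continuity inequality: for density matrices `ρ, σ` on a `2^n`-dimensional
space with `d = ‖ρ - σ‖₁ ≤ 1/e`, one has `|S(ρ) - S(σ)| ≤ d·n - d·log₂ d`. -/
theorem fannes_inequality (n : ℕ) (ρ σ : Matrix (Fin (2 ^ n)) (Fin (2 ^ n)) ℂ)
    (hρ : ρ.PosSemidef) (hσ : σ.PosSemidef)
    (hρtr : ρ.trace = 1) (hσtr : σ.trace = 1)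
    (hd : traceNorm (ρ - σ) ≤ 1 / Real.exp 1) :
    |vonNeumannEntropy hρ.1 - vonNeumannEntropy hσ.1|
      ≤ traceNorm (ρ - σ) * n - traceNorm (ρ - σ) * Real.logb 2 (traceNorm (ρ - σ)) := by
  classical
  have hNpos : 0 < 2 ^ n := Nat.pow_pos (by norm_num)
  have hde : traceNorm (ρ - σ) ≤ Real.exp (-1) := by
    rw [Real.exp_neg, ← one_div]
    exact hd
  have hρb := Fannes.eigenvalues_bounds hρ hρtr
  have hσb := Fannes.eigenvalues_bounds hσ hσtr
  have hsd := Fannes.sum_abs_sortEig_sub_le hρ.1 hσ.1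
  have hkey := Fannes.key hNpos (Fannes.sortEig hρ.1) (Fannes.sortEig hσ.1)
    (traceNorm (ρ - σ)) (fun k => hρb _) (fun k => hσb _) hsd hde
  have hlog2 : (0:ℝ) < Real.log 2 := Real.log_pos (by norm_num)
  have hlogN : Real.log ((2:ℕ) ^ n : ℕ) = n * Real.log 2 := by
    rw [Nat.cast_pow, Real.log_pow]
    norm_num
  rw [Fannes.vonNeumannEntropy_eq_sum_eta hρ.1, Fannes.vonNeumannEntropy_eq_sum_eta hσ.1]
  have hsρ : ∑ i, Fannes.eta (hρ.1.eigenvalues i) = ∑ k, Fannes.eta (Fannes.sortEig hρ.1 k) :=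
    (Equiv.sum_comp (Tuple.sort hρ.1.eigenvalues) fun i => Fannes.eta (hρ.1.eigenvalues i)).symm
  have hsσ : ∑ i, Fannes.eta (hσ.1.eigenvalues i) = ∑ k, Fannes.eta (Fannes.sortEig hσ.1 k) :=
    (Equiv.sum_comp (Tuple.sort hσ.1.eigenvalues) fun i => Fannes.eta (hσ.1.eigenvalues i)).symm
  rw [hsρ, hsσ, div_sub_div_same, abs_div, abs_of_pos hlog2]
  have hRHS : traceNorm (ρ - σ) * n - traceNorm (ρ - σ) * Real.logb 2 (traceNorm (ρ - σ))
      = (Fannes.eta (traceNorm (ρ - σ)) + traceNorm (ρ - σ) * Real.log ((2:ℕ) ^ n : ℕ))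
        / Real.log 2 := by
    rw [Real.logb, hlogN, Fannes.eta]
    field_simp
    ring
  rw [hRHS]
  exact div_le_div_of_nonneg_right hkey hlog2.le
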